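/- arXiv:2512.08915 — 4 statements merged into one kernel-verified Lean document; each statement's English description precedes it below -/
import Mathlib

section
/- Let G be a group and let Δ and Σ be subgroups of G such that Σ normalizes Δ (i.e. σΔσ⁻¹ = Δ for all σ ∈ Σ). Let r : Δ → G be a group homomorphism such that r(Δ) ⊆ Σ, r(δ) = δ for all δ ∈ Δ ∩ Σ, and r(σδσ⁻¹) = σ r(δ) σ⁻¹ for all σ ∈ Σ and δ ∈ Δ. Then there exists a group homomorphism r' from the subgroup generated by Δ and Σ (which equals the set ΔΣ = {δσ : δ ∈ Δ, σ ∈ Σ}) to G satisfying r'(δσ) = r(δ)σ for all δ ∈ Δ and σ ∈ Σ; in particular r'(σ) = σ for all σ ∈ Σ and the image of r' is contained in Σ. -/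
theorem exists_retraction_on_join {G : Type*} [Group G] (Δ S : Subgroup G)
    (hnorm : S ≤ Subgroup.normalizer (Δ : Set G))
    (r : Δ →* G)
    (hrange : ∀ δ : Δ, r δ ∈ S)
    (hid : ∀ δ : Δ, (δ : G) ∈ S → r δ = (δ : G))
    (hconj : ∀ σ : G, σ ∈ S → ∀ (δ : Δ) (h : σ * (δ : G) * σ⁻¹ ∈ Δ),
      r ⟨σ * (δ : G) * σ⁻¹, h⟩ = σ * r δ * σ⁻¹) :
    ∃ r' : (Δ ⊔ S : Subgroup G) →* G,
      (∀ (δ σ : G) (hδ : δ ∈ Δ) (hσ : σ ∈ S),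
        r' ⟨δ * σ, mul_mem ((le_sup_left : Δ ≤ Δ ⊔ S) hδ)
          ((le_sup_right : S ≤ Δ ⊔ S) hσ)⟩ = r ⟨δ, hδ⟩ * σ) ∧
      (∀ (σ : G) (hσ : σ ∈ S), r' ⟨σ, (le_sup_right : S ≤ Δ ⊔ S) hσ⟩ = σ) ∧
      (∀ x : (Δ ⊔ S : Subgroup G), r' x ∈ S) := by
  -- conjugation stability
  have hconjmem : ∀ σ ∈ S, ∀ δ ∈ Δ, σ * δ * σ⁻¹ ∈ Δ := by
    intro σ hσ δ hδ
    exact (Subgroup.mem_normalizer_iff.mp (hnorm hσ) δ).mp hδ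
  -- well-definedness
  have key : ∀ (δ₁ σ₁ δ₂ σ₂ : G) (h1 : δ₁ ∈ Δ) (h2 : σ₁ ∈ S) (h3 : δ₂ ∈ Δ) (h4 : σ₂ ∈ S),
      δ₁ * σ₁ = δ₂ * σ₂ → r ⟨δ₁, h1⟩ * σ₁ = r ⟨δ₂, h3⟩ * σ₂ := by
    intro δ₁ σ₁ δ₂ σ₂ h1 h2 h3 h4 heq
    have e : δ₂⁻¹ * δ₁ = σ₂ * σ₁⁻¹ := by
      have : δ₁ = δ₂ * (σ₂ * σ₁⁻¹) := by
        rw [← mul_assoc, eq_mul_inv_iff_mul_eq, heq]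
      rw [this]; group
    have hmΔ : δ₂⁻¹ * δ₁ ∈ Δ := mul_mem (inv_mem h3) h1
    have hmS : (δ₂⁻¹ * δ₁ : G) ∈ S := by rw [e]; exact mul_mem h4 (inv_mem h2)
    have hr : r ⟨δ₂⁻¹ * δ₁, hmΔ⟩ = σ₂ * σ₁⁻¹ := by
      rw [hid ⟨δ₂⁻¹ * δ₁, hmΔ⟩ hmS]; exact e
    have : r ⟨δ₁, h1⟩ = r ⟨δ₂, h3⟩ * (σ₂ * σ₁⁻¹) := by
      rw [← hr, ← map_mul]
      congr 1
      ext
      simp [mul_assoc]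
    rw [this]; group
  -- the product set is a subgroup
  let T : Subgroup G :=
    { carrier := {x | ∃ δ ∈ Δ, ∃ σ ∈ S, x = δ * σ}
      one_mem' := ⟨1, one_mem _, 1, one_mem _, by simp⟩
      mul_mem' := by
        rintro a b ⟨δ₁, hδ₁, σ₁, hσ₁, rfl⟩ ⟨δ₂, hδ₂, σ₂, hσ₂, rfl⟩
        exact ⟨δ₁ * (σ₁ * δ₂ * σ₁⁻¹), mul_mem hδ₁ (hconjmem σ₁ hσ₁ δ₂ hδ₂),
          σ₁ * σ₂, mul_mem hσ₁ hσ₂, by group⟩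
      inv_mem' := by
        rintro a ⟨δ, hδ, σ, hσ, rfl⟩
        exact ⟨σ⁻¹ * δ⁻¹ * σ, by simpa using hconjmem σ⁻¹ (inv_mem hσ) δ⁻¹ (inv_mem hδ),
          σ⁻¹, inv_mem hσ, by group⟩ }
  have hsupT : Δ ⊔ S ≤ T := by
    refine sup_le ?_ ?_
    · intro x hx; exact ⟨x, hx, 1, one_mem _, by simp⟩
    · intro x hx; exact ⟨1, one_mem _, x, hx, by simp⟩
  have hdec : ∀ x : (Δ ⊔ S : Subgroup G), ∃ p : Δ × S, (x : G) = p.1 * p.2 := by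
    intro x
    obtain ⟨δ, hδ, σ, hσ, hx⟩ := hsupT x.2
    exact ⟨(⟨δ, hδ⟩, ⟨σ, hσ⟩), hx⟩
  set f : (Δ ⊔ S : Subgroup G) → G :=
    fun x => r (hdec x).choose.1 * ((hdec x).choose.2 : G) with hf
  have hfspec : ∀ (x : (Δ ⊔ S : Subgroup G)) (δ σ : G) (hδ : δ ∈ Δ) (hσ : σ ∈ S),
      (x : G) = δ * σ → f x = r ⟨δ, hδ⟩ * σ := by
    intro x δ σ hδ hσ hx
    have h := (hdec x).choose_spec
    exact key _ _ _ _ (hdec x).choose.1.2 (hdec x).choose.2.2 hδ hσ (by rw [← h, ← hx])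
  have hmul : ∀ x y : (Δ ⊔ S : Subgroup G), f (x * y) = f x * f y := by
    intro x y
    obtain ⟨⟨δ₁, σ₁⟩, hx⟩ := hdec x
    obtain ⟨⟨δ₂, σ₂⟩, hy⟩ := hdec y
    have hconjΔ : (σ₁ : G) * δ₂ * (σ₁ : G)⁻¹ ∈ Δ := hconjmem σ₁ σ₁.2 δ₂ δ₂.2
    have hxy : ((x * y : (Δ ⊔ S : Subgroup G)) : G)
        = ((δ₁ : G) * ((σ₁ : G) * δ₂ * (σ₁ : G)⁻¹)) * ((σ₁ : G) * σ₂) := by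
      push_cast [hx, hy]; group
    rw [hfspec (x * y) _ _ (mul_mem δ₁.2 hconjΔ) (mul_mem σ₁.2 σ₂.2) hxy,
      hfspec x δ₁ σ₁ δ₁.2 σ₁.2 hx, hfspec y δ₂ σ₂ δ₂.2 σ₂.2 hy]
    have : r ⟨(δ₁ : G) * ((σ₁ : G) * δ₂ * (σ₁ : G)⁻¹), mul_mem δ₁.2 hconjΔ⟩
        = r δ₁ * r ⟨(σ₁ : G) * δ₂ * (σ₁ : G)⁻¹, hconjΔ⟩ := by
      rw [← map_mul]
      exact congrArg r (Subtype.ext rfl)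
    rw [this, hconj σ₁ σ₁.2 δ₂ hconjΔ]
    group
  have hr1 : r ⟨1, one_mem Δ⟩ = 1 := map_one r
  have hone : f 1 = 1 := by
    rw [hfspec 1 1 1 (one_mem _) (one_mem _) (by simp), hr1, one_mul]
  refine ⟨{ toFun := f, map_one' := hone, map_mul' := hmul }, ?_, ?_, ?_⟩
  · intro δ σ hδ hσ
    exact hfspec _ δ σ hδ hσ rfl
  · intro σ hσ
    have := hfspec ⟨σ, (le_sup_right : S ≤ Δ ⊔ S) hσ⟩ 1 σ (one_mem _) hσ (by simp)
    simp only [MonoidHom.coe_mk, OneHom.coe_mk]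
    rw [this, hr1, one_mul]
  · intro x
    obtain ⟨⟨δ, σ⟩, hx⟩ := hdec x
    simp only [MonoidHom.coe_mk, OneHom.coe_mk]
    rw [hfspec x δ σ δ.2 σ.2 hx]
    exact mul_mem (hrange δ) σ.2
end

section
/- Let G be a group and let Δ and Σ be subgroups of G such that Σ normalizes Δ. Let r : Δ → G be a group homomorphism such that r(Δ) ⊆ Δ ∩ Σ, r(δ) = δ for all δ ∈ Δ ∩ Σ, and r(σδσ⁻¹) = σ r(δ) σ⁻¹ for all σ ∈ Σ and δ ∈ Δ. If both Δ and Σ are torsion-free, then the subgroup generated by Δ and Σ is torsion-free. -/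
/-- A monoid is torsion-free if its only element of finite order is the identity
(the definition `Monoid.IsTorsionFree` of the older Mathlib, since removed). -/
def Monoid.IsTorsionFree (G : Type*) [Monoid G] : Prop :=
  ∀ g : G, g ≠ 1 → ¬IsOfFinOrder g

theorem join_isTorsionFree {G : Type*} [Group G] (Δ S : Subgroup G)
    (hnorm : S ≤ Subgroup.normalizer (Δ : Set G))
    (r : Δ →* G)
    (hrange : ∀ δ : Δ, r δ ∈ Δ ⊓ S)
    (hid : ∀ δ : Δ, (δ : G) ∈ S → r δ = (δ : G))
    (hconj : ∀ σ : G, σ ∈ S → ∀ (δ : Δ) (h : σ * (δ : G) * σ⁻¹ ∈ Δ),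
      r ⟨σ * (δ : G) * σ⁻¹, h⟩ = σ * r δ * σ⁻¹)
    (hΔ : Monoid.IsTorsionFree Δ) (hS : Monoid.IsTorsionFree S) :
    Monoid.IsTorsionFree (Δ ⊔ S : Subgroup G) := by
  -- conjugation stays in Δ
  have hc : ∀ σ ∈ S, ∀ d ∈ Δ, σ * d * σ⁻¹ ∈ Δ := fun σ hσ d hd =>
    (Subgroup.mem_normalizer_iff.mp (hnorm hσ) d).mp hd
  -- every element of the join factors as δ * σ
  have hdecomp : ∀ x ∈ (Δ ⊔ S : Subgroup G), ∃ d ∈ Δ, ∃ σ ∈ S, x = d * σ := by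
    intro x hx
    rw [Subgroup.sup_eq_closure] at hx
    induction hx using Subgroup.closure_induction with
    | mem y hy =>
      rcases hy with hy | hy
      · exact ⟨y, hy, 1, one_mem _, by simp⟩
      · exact ⟨1, one_mem _, y, hy, by simp⟩
    | one => exact ⟨1, one_mem _, 1, one_mem _, by simp⟩
    | mul y z _ _ ihy ihz =>
      obtain ⟨d₁, hd₁, σ₁, hσ₁, rfl⟩ := ihy
      obtain ⟨d₂, hd₂, σ₂, hσ₂, rfl⟩ := ihz
      exact ⟨d₁ * (σ₁ * d₂ * σ₁⁻¹), mul_mem hd₁ (hc σ₁ hσ₁ d₂ hd₂), σ₁ * σ₂,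
        mul_mem hσ₁ hσ₂, by group⟩
    | inv y _ ihy =>
      obtain ⟨d, hd, σ, hσ, rfl⟩ := ihy
      exact ⟨σ⁻¹ * d⁻¹ * σ, by simpa using hc σ⁻¹ (inv_mem hσ) d⁻¹ (inv_mem hd),
        σ⁻¹, inv_mem hσ, by group⟩
  -- well-definedness of δσ ↦ r δ * σ
  have hwd : ∀ (δ₁ : Δ) (σ₁ : G), σ₁ ∈ S → ∀ (δ₂ : Δ) (σ₂ : G), σ₂ ∈ S →
      (δ₁ : G) * σ₁ = (δ₂ : G) * σ₂ → r δ₁ * σ₁ = r δ₂ * σ₂ := by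
    intro δ₁ σ₁ hσ₁ δ₂ σ₂ hσ₂ heq
    have key : ((δ₂ : G))⁻¹ * ((δ₁ : G) * σ₁) = σ₂ := by rw [heq]; group
    have h1 : ((δ₂⁻¹ * δ₁ : Δ) : G) = σ₂ * σ₁⁻¹ := by
      push_cast; rw [← key]; group
    have h2 : ((δ₂⁻¹ * δ₁ : Δ) : G) ∈ S := h1 ▸ mul_mem hσ₂ (inv_mem hσ₁)
    have h3 := hid _ h2
    rw [map_mul, map_inv, h1] at h3
    calc r δ₁ * σ₁ = r δ₂ * ((r δ₂)⁻¹ * r δ₁) * σ₁ := by group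
      _ = r δ₂ * (σ₂ * σ₁⁻¹) * σ₁ := by rw [h3]
      _ = r δ₂ * σ₂ := by group
  -- multiplicativity data
  have hmul : ∀ (δ₁ : Δ) (σ₁ : G), σ₁ ∈ S → ∀ (δ₂ : Δ) (σ₂ : G), σ₂ ∈ S →
      ∃ (δ₃ : Δ) (σ₃ : G), σ₃ ∈ S ∧
        (δ₁ : G) * σ₁ * ((δ₂ : G) * σ₂) = (δ₃ : G) * σ₃ ∧
        r δ₃ * σ₃ = (r δ₁ * σ₁) * (r δ₂ * σ₂) := by
    intro δ₁ σ₁ hσ₁ δ₂ σ₂ hσ₂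
    have hmem : σ₁ * (δ₂ : G) * σ₁⁻¹ ∈ Δ := hc σ₁ hσ₁ δ₂ δ₂.2
    refine ⟨δ₁ * ⟨σ₁ * (δ₂ : G) * σ₁⁻¹, hmem⟩, σ₁ * σ₂, mul_mem hσ₁ hσ₂, ?_, ?_⟩
    · push_cast; group
    · rw [map_mul, hconj σ₁ hσ₁ δ₂ hmem]; group
  -- powers
  have hpow : ∀ (n : ℕ) (δ : Δ) (σ : G), σ ∈ S →
      ∃ (δ' : Δ) (σ' : G), σ' ∈ S ∧ ((δ : G) * σ) ^ n = (δ' : G) * σ' ∧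
        r δ' * σ' = (r δ * σ) ^ n := by
    intro n δ σ hσ
    induction n with
    | zero => exact ⟨1, 1, one_mem _, by simp, by simp⟩
    | succ n ih =>
      obtain ⟨δ', σ', hσ', h1, h2⟩ := ih
      obtain ⟨δ₃, σ₃, hσ₃, h3, h4⟩ := hmul δ' σ' hσ' δ σ hσ
      exact ⟨δ₃, σ₃, hσ₃, by rw [pow_succ, h1, h3], by rw [pow_succ, ← h2, h4]⟩
  -- main argument
  intro g hg hfin
  obtain ⟨n, hn, hgn⟩ := (isOfFinOrder_iff_pow_eq_one).mp hfin
  obtain ⟨d, hd, σ, hσ, hx⟩ := hdecomp (g : G) g.2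
  set δ : Δ := ⟨d, hd⟩
  obtain ⟨δ', σ', hσ', h1, h2⟩ := hpow n δ σ hσ
  have hxn : ((g : G)) ^ n = 1 := by
    have : ((g ^ n : (Δ ⊔ S : Subgroup G)) : G) = 1 := by rw [hgn]; rfl
    simpa using this
  have h1' : (δ' : G) * σ' = (1 : Δ) * (1 : G) := by
    rw [← h1, ← hx, hxn]; simp
  have h2' : r δ' * σ' = 1 := by
    rw [hwd δ' σ' hσ' 1 1 (one_mem _) h1']; simp
  have hρS : r δ * σ ∈ S := mul_mem ((hrange δ).2) hσ
  have hρn : (⟨r δ * σ, hρS⟩ : S) ^ n = 1 := by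
    ext; push_cast; rw [← h2, h2']
  have hρ1 : (⟨r δ * σ, hρS⟩ : S) = 1 := by
    by_contra hne
    exact hS _ hne (isOfFinOrder_iff_pow_eq_one.mpr ⟨n, hn, hρn⟩)
  have hρ1' : r δ * σ = 1 := congrArg Subtype.val hρ1
  -- then σ ∈ Δ, hence g ∈ Δ
  have hσΔ : σ ∈ Δ := by
    have h : (r δ)⁻¹ = σ := inv_eq_of_mul_eq_one_right hρ1'
    exact h ▸ inv_mem ((hrange δ).1)
  have hgΔ : (g : G) ∈ Δ := hx ▸ mul_mem hd hσΔ
  have hgn' : (⟨(g : G), hgΔ⟩ : Δ) ^ n = 1 := by ext; push_cast; exact hxn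
  have : (⟨(g : G), hgΔ⟩ : Δ) = 1 := by
    by_contra hne
    exact hΔ _ hne (isOfFinOrder_iff_pow_eq_one.mpr ⟨n, hn, hgn'⟩)
  exact hg (Subtype.ext (by simpa using congrArg Subtype.val this))
end

section
/- Let G be a group, p a natural number, and for each i ∈ {1, …, p} let H_i be a subgroup of G and r_i : G → H_i a retraction (a group homomorphism with r_i(h) = h for all h ∈ H_i) such that r_i(H_j) = {1} whenever j ≠ i. Then the group homomorphism from the direct product ∏_{i=1}^p Ab(H_i) of the abelianizations of the H_i to the abelianization Ab(G) of G, defined as the product of the maps induced by the inclusions H_i ↪ G, is injective. -/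
theorem abelianization_product_injective {G : Type*} [Group G] (p : ℕ)
    (H : Fin p → Subgroup G) (r : ∀ i, G →* H i)
    (hret : ∀ (i : Fin p) (h : G), h ∈ H i → (r i h : G) = h)
    (htriv : ∀ i j : Fin p, j ≠ i → ∀ h : G, h ∈ H j → (r i h : G) = 1) :
    Function.Injective (fun x : ∀ i : Fin p, Abelianization (H i) =>
      ∏ i : Fin p, Abelianization.map (H i).subtype (x i)) := by
  have key : ∀ (j : Fin p) (x : ∀ i : Fin p, Abelianization (H i)),
      Abelianization.map (r j) (∏ i : Fin p, Abelianization.map (H i).subtype (x i)) = x j := by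
    intro j x
    rw [map_prod]
    have h1 : ∀ i : Fin p,
        (Abelianization.map (r j)) (Abelianization.map (H i).subtype (x i)) =
          if i = j then x j else 1 := by
      intro i
      by_cases hij : i = j
      · subst hij
        simp only [if_pos rfl]
        have : (Abelianization.map (r i)).comp (Abelianization.map (H i).subtype) =
            MonoidHom.id _ := by
          apply Abelianization.hom_ext
          ext g
          simp only [MonoidHom.comp_apply, Abelianization.map_of, MonoidHom.id_apply]
          congr 1
          ext
          exact hret i g g.2
        calc (Abelianization.map (r i)) (Abelianization.map (H i).subtype (x i))
            = ((Abelianization.map (r i)).comp (Abelianization.map (H i).subtype)) (x i) := rfl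
          _ = x i := by rw [this]; rfl
      · rw [if_neg hij]
        have : (Abelianization.map (r j)).comp (Abelianization.map (H i).subtype) = 1 := by
          apply Abelianization.hom_ext
          ext g
          simp only [MonoidHom.comp_apply, Abelianization.map_of, MonoidHom.one_apply]
          have : (r j g : G) = 1 := htriv j i hij g g.2
          have hg : r j (g : G) = 1 := by ext; simpa using this
          rw [show (H i).subtype g = (g : G) from rfl, hg, map_one]
        calc (Abelianization.map (r j)) (Abelianization.map (H i).subtype (x i))
            = ((Abelianization.map (r j)).comp (Abelianization.map (H i).subtype)) (x i) := rfl
          _ = 1 := by rw [this]; rfl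
    rw [Finset.prod_congr rfl (fun i _ => h1 i)]
    simp
  intro x y hxy
  funext j
  have := congrArg (Abelianization.map (r j)) hxy
  simpa [key] using this
end

section
/- Let G be a group, p a natural number, and for each i ∈ {1, …, p} let H_i be a subgroup of G and r_i : G → H_i a retraction (a group homomorphism with r_i(h) = h for all h ∈ H_i) such that r_i(H_j) = {1} whenever j ≠ i. If for each i the abelianization Ab(H_i) contains an element of order 2, then there is an injective group homomorphism from (ℤ/2ℤ)^p into the abelianization Ab(G); in particular the torsion subgroup of Ab(G) has order at least 2^p. -/
def pow2Hom {M : Type*} [CommGroup M] (a : M) (ha : a ^ 2 = 1) :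
    Multiplicative (ZMod 2) →* M where
  toFun x := a ^ (Multiplicative.toAdd x).val
  map_one' := by simp
  map_mul' x y := by
    simp only [toAdd_mul]
    rw [← pow_add]
    have hdvd : orderOf a ∣ 2 := orderOf_dvd_of_pow_eq_one ha
    rw [pow_eq_pow_iff_modEq]
    exact (Nat.ModEq.of_dvd hdvd (by
      have : ((((Multiplicative.toAdd x) + (Multiplicative.toAdd y)).val : ℕ) : ZMod 2)
          = (((Multiplicative.toAdd x).val + (Multiplicative.toAdd y).val : ℕ) : ZMod 2) := by
        push_cast [ZMod.natCast_val]
        simp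
      exact (ZMod.natCast_eq_natCast_iff _ _ _).mp this))

lemma pow2Hom_eq_one_iff {M : Type*} [CommGroup M] (a : M) (ho : orderOf a = 2)
    (x : Multiplicative (ZMod 2)) :
    pow2Hom a (ho ▸ pow_orderOf_eq_one a) x = 1 ↔ x = 1 := by
  constructor
  · intro hx
    have hval : (Multiplicative.toAdd x).val = 0 ∨ (Multiplicative.toAdd x).val = 1 := by
      have := (Multiplicative.toAdd x).val_lt
      omega
    rcases hval with h | h
    · have h0 : Multiplicative.toAdd x = 0 := (ZMod.val_eq_zero _).mp h
      exact toAdd_eq_zero.mp h0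
    · exfalso
      have : a = 1 := by simpa [pow2Hom, h] using hx
      rw [this] at ho; simp at ho
  · rintro rfl; simp [pow2Hom]

theorem two_torsion_in_abelianization {G : Type*} [Group G] (p : ℕ)
    (H : Fin p → Subgroup G) (r : ∀ i, G →* H i)
    (hret : ∀ (i : Fin p) (h : G), h ∈ H i → (r i h : G) = h)
    (htriv : ∀ i j : Fin p, j ≠ i → ∀ h : G, h ∈ H j → (r i h : G) = 1)
    (h2 : ∀ i : Fin p, ∃ a : Abelianization (H i), orderOf a = 2) :
    (∃ ψ : (Fin p → Multiplicative (ZMod 2)) →* Abelianization G, Function.Injective ψ) ∧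
    2 ^ p ≤ Cardinal.mk (CommGroup.torsion (Abelianization G)) := by
  choose a ha using h2
  set φ : ∀ i, Multiplicative (ZMod 2) →* Abelianization (H i) :=
    fun i => pow2Hom (a i) ((ha i) ▸ pow_orderOf_eq_one (a i)) with hφ
  set ι : ∀ i, Abelianization (H i) →* Abelianization G :=
    fun i => Abelianization.map (H i).subtype with hι
  set ρ : ∀ j, Abelianization G →* Abelianization (H j) :=
    fun j => Abelianization.map (r j) with hρ
  have hcomp1 : ∀ j, (ρ j).comp (ι j) = MonoidHom.id _ := by
    intro j
    apply Abelianization.hom_ext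
    ext h
    simp only [MonoidHom.comp_apply, hι, hρ, Abelianization.map_of, MonoidHom.id_apply]
    congr 1
    exact Subtype.ext (hret j h h.2)
  have hcomp2 : ∀ j i, i ≠ j → (ρ j).comp (ι i) = 1 := by
    intro j i hij
    apply Abelianization.hom_ext
    ext h
    simp only [MonoidHom.comp_apply, hι, hρ, Abelianization.map_of, MonoidHom.one_apply]
    have : Abelianization.of (r j ((H i).subtype h)) = Abelianization.of 1 := by
      congr 1
      exact Subtype.ext (by simpa using htriv j i hij h h.2)
    simpa using this
  set ψ : (Fin p → Multiplicative (ZMod 2)) →* Abelianization G :=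
    MonoidHom.mk' (fun x => ∏ i, ι i (φ i (x i))) (by
      intro x y
      rw [← Finset.prod_mul_distrib]
      refine Finset.prod_congr rfl fun i _ => ?_
      simp [map_mul]) with hψ
  have hψ_inj : Function.Injective ψ := by
    rw [injective_iff_map_eq_one]
    intro x hx
    funext j
    have hx' : ρ j (ψ x) = 1 := by rw [hx, map_one]
    rw [hψ] at hx'
    simp only [MonoidHom.mk'_apply, map_prod] at hx'
    have hprod : ∀ i ∈ Finset.univ, i ≠ j → ρ j (ι i (φ i (x i))) = 1 := by
      intro i _ hij
      have := hcomp2 j i hij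
      calc ρ j (ι i (φ i (x i))) = ((ρ j).comp (ι i)) (φ i (x i)) := rfl
        _ = 1 := by rw [this]; rfl
    rw [Finset.prod_eq_single j (fun i _ hij => hprod i (Finset.mem_univ i) hij)
      (fun h => absurd (Finset.mem_univ j) h)] at hx'
    have : φ j (x j) = 1 := by
      have := hcomp1 j
      calc φ j (x j) = ((ρ j).comp (ι j)) (φ j (x j)) := by rw [this]; rfl
        _ = 1 := hx'
    exact (pow2Hom_eq_one_iff (a j) (ha j) (x j)).mp this
  refine ⟨⟨ψ, hψ_inj⟩, ?_⟩
  have hsq : ∀ x : Fin p → Multiplicative (ZMod 2), x * x = 1 := by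
    intro x
    funext i
    have : ∀ t : ZMod 2, t + t = 0 := by decide
    have h0 : Multiplicative.toAdd (x i * x i) = 0 := by
      simpa using this (Multiplicative.toAdd (x i))
    exact toAdd_eq_zero.mp h0
  set f : (Fin p → Multiplicative (ZMod 2)) → CommGroup.torsion (Abelianization G) :=
    fun x => ⟨ψ x, isOfFinOrder_iff_pow_eq_one.mpr
      ⟨2, by norm_num, by rw [sq, ← map_mul, hsq x, map_one]⟩⟩ with hf
  have hf_inj : Function.Injective f := by
    intro x y hxy
    exact hψ_inj (Subtype.ext_iff.mp hxy)
  have hf_inj' : Function.Injective (f ∘ (Equiv.ulift : ULift (Fin p → Multiplicative (ZMod 2)) ≃ _)) :=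
    hf_inj.comp Equiv.ulift.injective
  have hle := Cardinal.mk_le_of_injective hf_inj'
  calc (2 : Cardinal) ^ p = ((2 ^ p : ℕ) : Cardinal) := by push_cast; ring
    _ = Cardinal.mk (ULift (Fin p → Multiplicative (ZMod 2))) := by
        rw [Cardinal.mk_fintype]
        congr 1
        simp [Fintype.card_fun]
    _ ≤ _ := hle
end
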